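/- Assume positivity: p(X) > 0 μ-a.s. where p∘X is a version of E_μ[1_{S=1} | σ(X)]. Then the population augmented functional for the nested design evaluated at the true nuisance functions equals the identified nested risk: E_μ[ 1_{S=1} · W + 1_{S=0} · b(X) + 1_{S=1} · ((1 − p(X)) e^{η q(Y)} / (p(X) · c(X))) · (W − b(X)) ] = E_μ[1_{S=1} W] + E_μ[1_{S=0} b(X)]. In particular, if in addition the exponential tilt hypothesis holds (b∘X is a version of E_{μ₀}[W | σ(X)]), this common value equals ψ(η) = E_μ[W]. -/

import Mathlib

open MeasureTheory ProbabilityTheory Real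

lemma sup_min_ofReal (a b : ℝ) (hb : 0 ≤ b) :
    ⨆ n : ℕ, ENNReal.ofReal (min a n * b) = ENNReal.ofReal (a * b) := by
  refine le_antisymm (iSup_le fun n => ENNReal.ofReal_le_ofReal
    (mul_le_mul_of_nonneg_right (min_le_left _ _) hb)) ?_
  refine le_iSup_of_le ⌈a⌉₊ ?_
  rw [min_eq_left (Nat.le_ceil a)]

/-- Pull-out identity at the `lintegral` level for nonnegative factors. -/
lemma lemA {Ω : Type*} [m0 : MeasurableSpace Ω] (ν : Measure Ω) [IsProbabilityMeasure ν]
    {m : MeasurableSpace Ω} (hm : m ≤ m0) (φ h k : Ω → ℝ)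
    (hφm : Measurable[m] φ) (hφ0 : ∀ ω, 0 ≤ φ ω) (hh0 : ∀ ω, 0 ≤ h ω)
    (hhint : Integrable h ν) (hk : k =ᵐ[ν] ν[h|m]) :
    ∫⁻ ω, ENNReal.ofReal (φ ω * h ω) ∂ν = ∫⁻ ω, ENNReal.ofReal (φ ω * k ω) ∂ν := by
  have hφ : Measurable[m0] φ := fun s hs => hm _ (hφm hs)
  have hk0 : 0 ≤ᵐ[ν] k := by
    filter_upwards [hk, condExp_nonneg (m := m) (μ := ν)
      (Filter.Eventually.of_forall hh0)] with ω h1 h2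
    rw [h1]; exact h2
  have hkint : Integrable k ν := integrable_condExp.congr hk.symm
  -- the truncated equalities
  have key : ∀ n : ℕ, ∫⁻ ω, ENNReal.ofReal (min (φ ω) n * h ω) ∂ν
      = ∫⁻ ω, ENNReal.ofReal (min (φ ω) n * k ω) ∂ν := by
    intro n
    set φn : Ω → ℝ := fun ω => min (φ ω) n with hφn_def
    have hφn_bd : ∀ ω, ‖φn ω‖ ≤ n := by
      intro ω
      rw [Real.norm_eq_abs, abs_of_nonneg (le_min (hφ0 ω) n.cast_nonneg)]
      exact min_le_right _ _
    have hφnM : Measurable[m0] φn := hφ.min measurable_const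
    have hφnSM : AEStronglyMeasurable[m0] φn ν := hφnM.aestronglyMeasurable
    have hφn_m : StronglyMeasurable[m] φn := (hφm.min measurable_const).stronglyMeasurable
    have hφnh_int : Integrable (φn * h) ν :=
      hhint.bdd_mul hφnSM (c := n) (Filter.Eventually.of_forall hφn_bd)
    have hφnk_int : Integrable (φn * k) ν :=
      hkint.bdd_mul hφnSM (c := n) (Filter.Eventually.of_forall hφn_bd)
    have hpull : ν[φn * h|m] =ᵐ[ν] φn * ν[h|m] :=
      condExp_mul_of_stronglyMeasurable_left hφn_m hφnh_int hhint
    have hint_eq : ∫ ω, (φn * h) ω ∂ν = ∫ ω, (φn * k) ω ∂ν := by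
      rw [← integral_condExp hm (f := φn * h)]
      refine integral_congr_ae (hpull.trans ?_)
      filter_upwards [hk] with ω hω
      simp [hω]
    have h1 : ENNReal.ofReal (∫ ω, (φn * h) ω ∂ν) = ∫⁻ ω, ENNReal.ofReal ((φn * h) ω) ∂ν :=
      ofReal_integral_eq_lintegral_ofReal hφnh_int
        (Filter.Eventually.of_forall fun ω =>
          mul_nonneg (le_min (hφ0 ω) n.cast_nonneg) (hh0 ω))
    have h2 : ENNReal.ofReal (∫ ω, (φn * k) ω ∂ν) = ∫⁻ ω, ENNReal.ofReal ((φn * k) ω) ∂ν :=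
      ofReal_integral_eq_lintegral_ofReal hφnk_int
        (hk0.mono fun ω hω => mul_nonneg (le_min (hφ0 ω) n.cast_nonneg) hω)
    calc ∫⁻ ω, ENNReal.ofReal (min (φ ω) n * h ω) ∂ν
        = ENNReal.ofReal (∫ ω, (φn * h) ω ∂ν) := h1.symm
      _ = ENNReal.ofReal (∫ ω, (φn * k) ω ∂ν) := by rw [hint_eq]
      _ = ∫⁻ ω, ENNReal.ofReal (min (φ ω) n * k ω) ∂ν := h2
  -- monotone convergence on both sides
  have hmono : ∀ (g : Ω → ℝ), (0 ≤ g) →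
      ∀ ω, Monotone fun n : ℕ => ENNReal.ofReal (min (φ ω) n * g ω) := by
    intro g hg ω i j hij
    exact ENNReal.ofReal_le_ofReal (mul_le_mul_of_nonneg_right
      (min_le_min le_rfl (Nat.cast_le.2 hij)) (hg ω))
  have haem : ∀ (g : Ω → ℝ), AEMeasurable g ν → ∀ n : ℕ,
      AEMeasurable (fun ω => ENNReal.ofReal (min (φ ω) n * g ω)) ν := by
    intro g hg n
    have hφnM : Measurable[m0] fun ω => min (φ ω) (n : ℝ) := hφ.min measurable_const
    have : AEMeasurable (fun ω => min (φ ω) (n : ℝ) * g ω) ν := hφnM.aemeasurable.mul hg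
    exact this.ennreal_ofReal
  have lhs : ∫⁻ ω, ENNReal.ofReal (φ ω * h ω) ∂ν
      = ⨆ n : ℕ, ∫⁻ ω, ENNReal.ofReal (min (φ ω) n * h ω) ∂ν := by
    rw [← lintegral_iSup' (haem h hhint.1.aemeasurable)
      (Filter.Eventually.of_forall fun ω => hmono h hh0 ω)]
    exact lintegral_congr fun ω => (sup_min_ofReal (φ ω) (h ω) (hh0 ω)).symm
  have rhs : ∫⁻ ω, ENNReal.ofReal (φ ω * k ω) ∂ν
      = ⨆ n : ℕ, ∫⁻ ω, ENNReal.ofReal (min (φ ω) n * k ω) ∂ν := by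
    have hmono' : ∀ᵐ ω ∂ν, Monotone fun n : ℕ => ENNReal.ofReal (min (φ ω) n * k ω) := by
      filter_upwards [hk0] with ω hω i j hij
      exact ENNReal.ofReal_le_ofReal (mul_le_mul_of_nonneg_right
        (min_le_min le_rfl (Nat.cast_le.2 hij)) hω)
    rw [← lintegral_iSup' (haem k hkint.1.aemeasurable) hmono']
    refine lintegral_congr_ae ?_
    filter_upwards [hk0] with ω hω
    exact (sup_min_ofReal (φ ω) (k ω) hω).symm
  rw [lhs, rhs]
  exact iSup_congr key

lemma integral_cond_eq {Ω : Type*} [MeasurableSpace Ω] (μ : Measure Ω) {s : Set Ω}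
    (hs0 : μ s ≠ 0) (hsT : μ s ≠ ⊤) (f : Ω → ℝ) :
    ∫ ω in s, f ω ∂μ = (μ s).toReal * ∫ ω, f ω ∂μ[|s] := by
  have hne : (μ s).toReal ≠ 0 := by
    simp [ENNReal.toReal_eq_zero_iff, hs0, hsT]
  rw [ProbabilityTheory.cond, integral_smul_measure, smul_eq_mul, ← mul_assoc,
    ENNReal.toReal_inv, mul_inv_cancel₀ hne, one_mul]

/-- Integrals against condexp versions. -/
lemma integral_eq_of_condexp_ver {Ω : Type*} {𝒳 : Type*} [MeasurableSpace Ω] [MeasurableSpace 𝒳]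
    (ν : Measure Ω) [IsProbabilityMeasure ν] (X : Ω → 𝒳) (hX : Measurable X)
    (f k : Ω → ℝ) (hk : k =ᵐ[ν] ν[f|MeasurableSpace.comap X inferInstance]) :
    ∫ ω, k ω ∂ν = ∫ ω, f ω ∂ν := by
  haveI : IsFiniteMeasure (ν.trim hX.comap_le) := isFiniteMeasure_trim _
  rw [integral_congr_ae hk, integral_condExp hX.comap_le]

/-- Main auxiliary lemma: the correction term has zero mean under `ν = μ₁`. -/
lemma integral_corr_zero {Ω : Type*} {𝒳 : Type*} [m0 : MeasurableSpace Ω] [MeasurableSpace 𝒳]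
    (ν : Measure Ω) [IsProbabilityMeasure ν] (X : Ω → 𝒳) (hX : Measurable X)
    (W e : Ω → ℝ) (c r g : 𝒳 → ℝ)
    (hc : Measurable c) (hr : Measurable r) (hg : Measurable g)
    (he_meas : Measurable e) (he_pos : ∀ ω, 0 < e ω)
    (he_int : Integrable e ν)
    (hWe_int : Integrable (fun ω => W ω * e ω) ν)
    (hcver : (fun ω => c (X ω)) =ᵐ[ν] ν[e|MeasurableSpace.comap X inferInstance])
    (hcpos : ∀ᵐ ω ∂ν, 0 < c (X ω))
    (hrver : (fun ω => r (X ω)) =ᵐ[ν]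
      ν[fun ω => W ω * e ω|MeasurableSpace.comap X inferInstance])
    (hcorr_int : Integrable (fun ω => g (X ω) * (e ω * (W ω - r (X ω) / c (X ω)))) ν) :
    ∫ ω, g (X ω) * (e ω * (W ω - r (X ω) / c (X ω))) ∂ν = 0 := by
  have hm : MeasurableSpace.comap X inferInstance ≤ m0 := hX.comap_le
  set m : MeasurableSpace Ω := MeasurableSpace.comap X inferInstance with hm_def
  haveI : IsFiniteMeasure (ν.trim hm) := isFiniteMeasure_trim hm
  have hXm : Measurable[m] X := fun t ht => ⟨t, ht, rfl⟩
  have hbSM : StronglyMeasurable[m] fun ω => r (X ω) / c (X ω) :=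
    ((hr.div hc).comp hXm).stronglyMeasurable
  have hgSM : StronglyMeasurable[m] fun ω => g (X ω) := (hg.comp hXm).stronglyMeasurable
  have hrX_int : Integrable (fun ω => r (X ω)) ν := integrable_condExp.congr hrver.symm
  have hbXmeas : Measurable[m0] fun ω => r (X ω) / c (X ω) := (hr.div hc).comp hX
  have hbe_int : Integrable ((fun ω => r (X ω) / c (X ω)) * e) ν := by
    refine ⟨(hbXmeas.mul he_meas).aestronglyMeasurable, ?_⟩
    rw [hasFiniteIntegral_iff_norm]
    have key := lemA (m0 := m0) ν hm (fun ω => |r (X ω) / c (X ω)|) e (fun ω => c (X ω))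
      (((hr.div hc).comp hXm).abs) (fun ω => abs_nonneg _) (fun ω => (he_pos ω).le)
      he_int hcver
    calc ∫⁻ ω, ENNReal.ofReal ‖((fun ω => r (X ω) / c (X ω)) * e) ω‖ ∂ν
        = ∫⁻ ω, ENNReal.ofReal (|r (X ω) / c (X ω)| * e ω) ∂ν := by
          refine lintegral_congr fun ω => ?_
          rw [Pi.mul_apply, Real.norm_eq_abs, abs_mul, abs_of_pos (he_pos ω)]
      _ = ∫⁻ ω, ENNReal.ofReal (|r (X ω) / c (X ω)| * c (X ω)) ∂ν := key
      _ = ∫⁻ ω, ENNReal.ofReal ‖r (X ω)‖ ∂ν := by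
          refine lintegral_congr_ae ?_
          filter_upwards [hcpos] with ω hc0
          rw [Real.norm_eq_abs, abs_div, abs_of_pos hc0, div_mul_cancel₀ _ (ne_of_gt hc0)]
      _ < ⊤ := (hasFiniteIntegral_iff_norm _).mp hrX_int.2
  have hpull_b := condExp_mul_of_stronglyMeasurable_left (μ := ν) hbSM hbe_int he_int
  have hsub := condExp_sub (μ := ν) (m := m) hWe_int hbe_int
  have hhfun_int : Integrable (fun ω => e ω * (W ω - r (X ω) / c (X ω))) ν := by
    refine (hWe_int.sub hbe_int).congr (Filter.Eventually.of_forall fun ω => ?_)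
    simp only [Pi.sub_apply, Pi.mul_apply]; ring
  have hcond0 : ν[fun ω => e ω * (W ω - r (X ω) / c (X ω))|m] =ᵐ[ν] 0 := by
    have heq : (fun ω => e ω * (W ω - r (X ω) / c (X ω)))
        = (fun ω => W ω * e ω) - (fun ω => r (X ω) / c (X ω)) * e := by
      funext ω; simp only [Pi.sub_apply, Pi.mul_apply]; ring
    rw [heq]
    refine hsub.trans ?_
    filter_upwards [hpull_b, hrver, hcver, hcpos] with ω h1 h2 h3 h4
    simp only [Pi.sub_apply, Pi.mul_apply, Pi.zero_apply] at h1 ⊢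
    rw [h1, ← h2, ← h3, div_mul_cancel₀ _ (ne_of_gt h4), sub_self]
  have hgh_int : Integrable ((fun ω => g (X ω)) * fun ω => e ω * (W ω - r (X ω) / c (X ω))) ν :=
    hcorr_int.congr (Filter.Eventually.of_forall fun ω => rfl)
  have hpull_g := condExp_mul_of_stronglyMeasurable_left (μ := ν) hgSM hgh_int hhfun_int
  have hzero : ν[(fun ω => g (X ω)) * fun ω => e ω * (W ω - r (X ω) / c (X ω))|m] =ᵐ[ν] 0 := by
    refine hpull_g.trans ?_
    filter_upwards [hcond0] with ω h1
    simp only [Pi.mul_apply, Pi.zero_apply] at h1 ⊢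
    rw [h1, mul_zero]
  calc ∫ ω, g (X ω) * (e ω * (W ω - r (X ω) / c (X ω))) ∂ν
      = ∫ ω, ((fun ω => g (X ω)) * fun ω => e ω * (W ω - r (X ω) / c (X ω))) ω ∂ν := rfl
    _ = ∫ ω, (ν[(fun ω => g (X ω)) * fun ω => e ω * (W ω - r (X ω) / c (X ω))|m]) ω ∂ν :=
        (integral_condExp hm).symm
    _ = ∫ ω, (0 : Ω → ℝ) ω ∂ν := integral_congr_ae hzero
    _ = 0 := by simp


/-- The population augmented functional for the nested design, evaluated at the true
nuisance functions `p`, `c`, `b = r/c`, equals the identified nested risk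
`E_μ[1_{S=1} W] + E_μ[1_{S=0} b(X)]`; and if in addition the exponential tilt hypothesis
holds (`b∘X` a version of `E_{μ₀}[W | σ(X)]`), this common value equals
`ψ(η) = E_μ[W]`. -/
theorem augmented_functional_nested_at_truth
    {Ω : Type*} [MeasurableSpace Ω] {𝒳 : Type*} [MeasurableSpace 𝒳]
    (μ : Measure Ω) [IsProbabilityMeasure μ]
    (X : Ω → 𝒳) (Y : Ω → ℝ) (S : Ω → Bool)
    (hX : Measurable X) (hY : Measurable Y) (hS : Measurable S)
    (hS1 : 0 < μ {ω | S ω = true}) (hS0 : 0 < μ {ω | S ω = false})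
    (η : ℝ) (q : ℝ → ℝ) (hq : Measurable q)
    (ℓ : 𝒳 → ℝ → ℝ) (hℓ : Measurable (Function.uncurry ℓ))
    (c r : 𝒳 → ℝ) (hc : Measurable c) (hr : Measurable r)
    (hexp_int : Integrable (fun ω => Real.exp (η * q (Y ω))) (μ[|{ω | S ω = true}]))
    (hWexp_int : Integrable (fun ω => ℓ (X ω) (Y ω) * Real.exp (η * q (Y ω)))
      (μ[|{ω | S ω = true}]))
    (hcver : (fun ω => c (X ω)) =ᵐ[μ[|{ω | S ω = true}]]
      (μ[|{ω | S ω = true}])[fun ω => Real.exp (η * q (Y ω)) |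
        MeasurableSpace.comap X inferInstance])
    (hcpos : ∀ᵐ ω ∂(μ[|{ω | S ω = true}]), 0 < c (X ω))
    (hrver : (fun ω => r (X ω)) =ᵐ[μ[|{ω | S ω = true}]]
      (μ[|{ω | S ω = true}])[fun ω => ℓ (X ω) (Y ω) * Real.exp (η * q (Y ω)) |
        MeasurableSpace.comap X inferInstance])
    -- the true propensity, with positivity
    (p : 𝒳 → ℝ) (hp : Measurable p)
    (hpver : (fun ω => p (X ω)) =ᵐ[μ]
      μ[fun ω => if S ω then (1 : ℝ) else 0 | MeasurableSpace.comap X inferInstance])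
    (hppos : ∀ᵐ ω ∂μ, 0 < p (X ω))
    (hW_int : Integrable (fun ω => ℓ (X ω) (Y ω)) μ)
    (hW_int₀ : Integrable (fun ω => ℓ (X ω) (Y ω)) (μ[|{ω | S ω = false}]))
    (hind_int : Integrable (fun ω => if S ω then ℓ (X ω) (Y ω) else 0) μ)
    (hb_int : Integrable (fun ω => if S ω then 0 else r (X ω) / c (X ω)) μ)
    (hintegrand : Integrable (fun ω =>
      if S ω then ℓ (X ω) (Y ω)
        + ((1 - p (X ω)) * Real.exp (η * q (Y ω)) / (p (X ω) * c (X ω)))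
          * (ℓ (X ω) (Y ω) - r (X ω) / c (X ω))
      else r (X ω) / c (X ω)) μ) :
    ((∫ ω, (if S ω then ℓ (X ω) (Y ω)
          + ((1 - p (X ω)) * Real.exp (η * q (Y ω)) / (p (X ω) * c (X ω)))
            * (ℓ (X ω) (Y ω) - r (X ω) / c (X ω))
        else r (X ω) / c (X ω)) ∂μ)
      = (∫ ω, (if S ω then ℓ (X ω) (Y ω) else 0) ∂μ)
        + ∫ ω, (if S ω then 0 else r (X ω) / c (X ω)) ∂μ) ∧
    -- under the exponential tilt hypothesis the common value is ψ(η) = E_μ[W]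
    (((fun ω => r (X ω) / c (X ω)) =ᵐ[μ[|{ω | S ω = false}]]
        (μ[|{ω | S ω = false}])[fun ω => ℓ (X ω) (Y ω) |
          MeasurableSpace.comap X inferInstance]) →
      (∫ ω, (if S ω then ℓ (X ω) (Y ω)
            + ((1 - p (X ω)) * Real.exp (η * q (Y ω)) / (p (X ω) * c (X ω)))
              * (ℓ (X ω) (Y ω) - r (X ω) / c (X ω))
          else r (X ω) / c (X ω)) ∂μ)
        = ∫ ω, ℓ (X ω) (Y ω) ∂μ) := by
  classical
  set s : Set Ω := {ω | S ω = true} with hs_def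
  set s' : Set Ω := {ω | S ω = false} with hs'_def
  have hs : MeasurableSet s := hS (measurableSet_singleton true)
  have hs' : MeasurableSet s' := hS (measurableSet_singleton false)
  have hμs0 : μ s ≠ 0 := hS1.ne'
  have hμsT : μ s ≠ ⊤ := measure_ne_top μ s
  have hμs'0 : μ s' ≠ 0 := hS0.ne'
  have hμs'T : μ s' ≠ ⊤ := measure_ne_top μ s'
  haveI hPν : IsProbabilityMeasure (μ[|s]) := cond_isProbabilityMeasure hμs0
  haveI hPν₀ : IsProbabilityMeasure (μ[|s']) := cond_isProbabilityMeasure hμs'0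
  have htrans : ∀ (t : Set Ω), μ t ≠ 0 → ∀ f : Ω → ℝ, Integrable f μ →
      Integrable f (μ[|t]) := by
    intro t ht f hf
    rw [ProbabilityTheory.cond]
    exact hf.restrict.smul_measure (ENNReal.inv_ne_top.mpr ht)
  have haeS : ∀ᵐ ω ∂(μ[|s]), S ω = true := by
    rw [ProbabilityTheory.cond]
    exact Measure.ae_smul_measure (ae_restrict_mem hs) _
  set corr : Ω → ℝ := fun ω => ((1 - p (X ω)) * Real.exp (η * q (Y ω)) / (p (X ω) * c (X ω)))
      * (ℓ (X ω) (Y ω) - r (X ω) / c (X ω)) with hcorr_def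
  -- integrability of the correction under μ[|s]
  have hFν := htrans s hμs0 _ hintegrand
  have hWν := htrans s hμs0 _ hW_int
  have hcorrν : Integrable corr (μ[|s]) := by
    have h1 : (fun ω =>
        if S ω then ℓ (X ω) (Y ω)
          + ((1 - p (X ω)) * Real.exp (η * q (Y ω)) / (p (X ω) * c (X ω)))
            * (ℓ (X ω) (Y ω) - r (X ω) / c (X ω))
        else r (X ω) / c (X ω)) =ᵐ[μ[|s]] fun ω => ℓ (X ω) (Y ω) + corr ω := by
      filter_upwards [haeS] with ω hω
      simp [hω, hcorr_def]
    refine ((hFν.congr h1).sub hWν).congr (Filter.Eventually.of_forall fun ω => ?_)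
    simp only [Pi.sub_apply]; ring
  -- zero-mean of the correction
  have hcorr0 : ∫ ω, corr ω ∂(μ[|s]) = 0 := by
    have hint : Integrable (fun ω => ((1 - p (X ω)) / (p (X ω) * c (X ω)))
        * (Real.exp (η * q (Y ω)) * (ℓ (X ω) (Y ω) - r (X ω) / c (X ω)))) (μ[|s]) := by
      refine hcorrν.congr (Filter.Eventually.of_forall fun ω => ?_)
      simp only [hcorr_def]; ring
    have hkey := integral_corr_zero (μ[|s]) X hX (fun ω => ℓ (X ω) (Y ω))
      (fun ω => Real.exp (η * q (Y ω))) c r (fun x => (1 - p x) / (p x * c x))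
      hc hr ((measurable_const.sub hp).div (hp.mul hc))
      (((hq.comp hY).const_mul η).exp) (fun ω => Real.exp_pos _)
      (by exact hexp_int) (by exact hWexp_int) (by exact hcver) (by exact hcpos)
      (by exact hrver) (by exact hint)
    rw [← hkey]
    refine integral_congr_ae (Filter.Eventually.of_forall fun ω => ?_)
    simp only [hcorr_def]; ring
  -- integrability of the indicator of the correction
  have hI3_int : Integrable (fun ω => if S ω then corr ω else 0) μ := by
    refine ((hintegrand.sub hind_int).sub hb_int).congr
      (Filter.Eventually.of_forall fun ω => ?_)
    simp only [Pi.sub_apply, hcorr_def]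
    cases hSω : S ω <;> simp <;> ring
  -- splitting the integrand
  have hsplit : (∫ ω, (if S ω then ℓ (X ω) (Y ω)
          + ((1 - p (X ω)) * Real.exp (η * q (Y ω)) / (p (X ω) * c (X ω)))
            * (ℓ (X ω) (Y ω) - r (X ω) / c (X ω))
        else r (X ω) / c (X ω)) ∂μ)
      = ((∫ ω, (if S ω then ℓ (X ω) (Y ω) else 0) ∂μ)
          + ∫ ω, (if S ω then 0 else r (X ω) / c (X ω)) ∂μ)
        + ∫ ω, (if S ω then corr ω else 0) ∂μ := by
    calc (∫ ω, (if S ω then ℓ (X ω) (Y ω)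
          + ((1 - p (X ω)) * Real.exp (η * q (Y ω)) / (p (X ω) * c (X ω)))
            * (ℓ (X ω) (Y ω) - r (X ω) / c (X ω))
        else r (X ω) / c (X ω)) ∂μ)
        = ∫ ω, (((if S ω then ℓ (X ω) (Y ω) else 0)
            + (if S ω then 0 else r (X ω) / c (X ω)))
            + (if S ω then corr ω else 0)) ∂μ := by
          refine integral_congr_ae (Filter.Eventually.of_forall fun ω => ?_)
          simp only [hcorr_def]
          cases hSω : S ω <;> simp
      _ = (∫ ω, ((if S ω then ℓ (X ω) (Y ω) else 0)
            + (if S ω then 0 else r (X ω) / c (X ω))) ∂μ)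
          + ∫ ω, (if S ω then corr ω else 0) ∂μ :=
          integral_add (hind_int.add hb_int) hI3_int
      _ = ((∫ ω, (if S ω then ℓ (X ω) (Y ω) else 0) ∂μ)
          + ∫ ω, (if S ω then 0 else r (X ω) / c (X ω)) ∂μ)
        + ∫ ω, (if S ω then corr ω else 0) ∂μ := by
          rw [integral_add hind_int hb_int]
  -- the indicator of the correction has zero integral
  have hI3_zero : ∫ ω, (if S ω then corr ω else 0) ∂μ = 0 := by
    have h1 : ∫ ω, (if S ω then corr ω else 0) ∂μ = ∫ ω in s, corr ω ∂μ := by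
      rw [← integral_indicator hs]
      refine integral_congr_ae (Filter.Eventually.of_forall fun ω => ?_)
      by_cases hω : ω ∈ s
      · simp [Set.indicator_of_mem hω, (show S ω = true from hω)]
      · simp [Set.indicator_of_notMem hω, (show ¬ S ω = true from hω)]
    rw [h1, integral_cond_eq μ hμs0 hμsT, hcorr0, mul_zero]
  constructor
  · rw [hsplit, hI3_zero, add_zero]
  · intro htilt
    rw [hsplit, hI3_zero, add_zero]
    have h0W_int : Integrable (fun ω => if S ω then 0 else ℓ (X ω) (Y ω)) μ := by
      refine (hW_int.sub hind_int).congr (Filter.Eventually.of_forall fun ω => ?_)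
      simp only [Pi.sub_apply]
      cases hSω : S ω <;> simp
    have hI2 : ∫ ω, (if S ω then 0 else r (X ω) / c (X ω)) ∂μ
        = ∫ ω, (if S ω then 0 else ℓ (X ω) (Y ω)) ∂μ := by
      have e1 : ∫ ω, (if S ω then 0 else r (X ω) / c (X ω)) ∂μ
          = ∫ ω in s', r (X ω) / c (X ω) ∂μ := by
        rw [← integral_indicator hs']
        refine integral_congr_ae (Filter.Eventually.of_forall fun ω => ?_)
        by_cases hω : ω ∈ s'
        · have : S ω = false := hω
          simp [Set.indicator_of_mem hω, this]
        · have : S ω = true := by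
            have := (show ¬ S ω = false from hω)
            exact Bool.not_eq_false _ ▸ (by simpa using this)
          simp [Set.indicator_of_notMem hω, this]
      have e5 : ∫ ω, (if S ω then 0 else ℓ (X ω) (Y ω)) ∂μ
          = ∫ ω in s', ℓ (X ω) (Y ω) ∂μ := by
        rw [← integral_indicator hs']
        refine integral_congr_ae (Filter.Eventually.of_forall fun ω => ?_)
        by_cases hω : ω ∈ s'
        · have : S ω = false := hω
          simp [Set.indicator_of_mem hω, this]
        · have : S ω = true := by
            have := (show ¬ S ω = false from hω)
            exact Bool.not_eq_false _ ▸ (by simpa using this)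
          simp [Set.indicator_of_notMem hω, this]
      have e3 : ∫ ω, r (X ω) / c (X ω) ∂(μ[|s']) = ∫ ω, ℓ (X ω) (Y ω) ∂(μ[|s']) :=
        integral_eq_of_condexp_ver (μ[|s']) X hX _ _ (by exact htilt)
      rw [e1, e5, integral_cond_eq μ hμs'0 hμs'T, integral_cond_eq μ hμs'0 hμs'T, e3]
    rw [hI2, ← integral_add hind_int h0W_int]
    refine integral_congr_ae (Filter.Eventually.of_forall fun ω => ?_)
    cases hSω : S ω <;> simp [hSω]
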